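/- Let Φ(x) denote the cumulative distribution function of the standard Gaussian distribution N(0,1), and let GeLU(x) = x·Φ(x). Let m be a positive integer and a_1,…,a_m, b_1,…,b_m, c_1,…,c_m real numbers such that |b_i| ≠ |b_j| whenever i ≠ j, and such that a_k·b_k ≠ 0 for some k. Then the function f(x) = Σ_{i=1}^m a_i GeLU(b_i x + c_i) is not constant on ℝ; that is, there exist x, y ∈ ℝ with f(x) ≠ f(y). -/

import Mathlib

/-- The cumulative distribution function of the standard Gaussian distribution,
`Φ x = ∫_{-∞}^x (2π)^{-1/2} exp (-t²/2) dt`. -/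
noncomputable def stdGaussCDF (x : ℝ) : ℝ :=
  ∫ t in Set.Iic x, (Real.sqrt (2 * Real.pi))⁻¹ * Real.exp (-t ^ 2 / 2)

open Real MeasureTheory Filter Topology Set

noncomputable def gaussDen (t : ℝ) : ℝ := (Real.sqrt (2 * Real.pi))⁻¹ * Real.exp (-t ^ 2 / 2)

lemma gaussDen_cont : Continuous gaussDen := by
  unfold gaussDen; fun_prop

lemma gaussDen_integrable : Integrable gaussDen := by
  have h := integrable_exp_neg_mul_sq (b := (1:ℝ)/2) (by norm_num)
  have : gaussDen = fun t => (Real.sqrt (2 * Real.pi))⁻¹ * Real.exp (-(1/2) * t ^ 2) := by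
    funext t; unfold gaussDen; ring_nf
  rw [this]
  exact h.const_mul _



lemma stdGaussCDF_hasDeriv (x : ℝ) : HasDerivAt stdGaussCDF (gaussDen x) x := by
  have hint : ∀ y : ℝ, IntegrableOn gaussDen (Iic y) := fun y =>
    gaussDen_integrable.integrableOn
  have heq : ∀ y : ℝ, stdGaussCDF y = (∫ t in Iic (0:ℝ), gaussDen t) + ∫ t in (0:ℝ)..y, gaussDen t := by
    intro y
    have := intervalIntegral.integral_Iic_sub_Iic (μ := volume) (f := gaussDen) (hint 0) (hint y)
    unfold stdGaussCDF gaussDen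
    unfold gaussDen at this
    linarith [this]
  have hd : HasDerivAt (fun y => (∫ t in Iic (0:ℝ), gaussDen t) + ∫ t in (0:ℝ)..y, gaussDen t) (gaussDen x) x := by
    exact HasDerivAt.const_add _ <| intervalIntegral.integral_hasDerivAt_right
      gaussDen_integrable.intervalIntegrable
      (gaussDen_cont.stronglyMeasurableAtFilter _ _)
      gaussDen_cont.continuousAt
  exact hd.congr_of_eventuallyEq (Filter.Eventually.of_forall heq)

/-- The GeLU function `GeLU x = x * Φ x`. -/
noncomputable def gelu (x : ℝ) : ℝ := x * stdGaussCDF x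


lemma gelu_hasDeriv (x : ℝ) :
    HasDerivAt gelu (stdGaussCDF x + x * gaussDen x) x := by
  have := (hasDerivAt_id x).mul (stdGaussCDF_hasDeriv x)
  exact this.congr_deriv (by simp)

lemma gaussDen_hasDeriv (x : ℝ) : HasDerivAt gaussDen (-x * gaussDen x) x := by
  have h1 : HasDerivAt (fun t : ℝ => -t ^ 2 / 2) (-x) x := by
    have : HasDerivAt (fun t : ℝ => -t ^ 2 / 2) (-(2 * x ^ 1) / 2) x := by
      exact ((hasDerivAt_pow 2 x).neg).div_const 2
    convert this using 1; ring
  have h2 := (h1.exp).const_mul ((Real.sqrt (2 * Real.pi))⁻¹)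
  have : HasDerivAt gaussDen ((Real.sqrt (2 * Real.pi))⁻¹ * (Real.exp (-x ^ 2 / 2) * -x)) x := h2
  convert this using 1
  unfold gaussDen; ring

lemma geluDeriv_hasDeriv (x : ℝ) :
    HasDerivAt (fun y => stdGaussCDF y + y * gaussDen y) ((2 - x ^ 2) * gaussDen x) x := by
  have h := (stdGaussCDF_hasDeriv x).add ((hasDerivAt_id' x).mul (gaussDen_hasDeriv x))
  exact h.congr_deriv (by ring)

lemma pow_mul_exp_quad_tendsto (n : ℕ) (ε β γ : ℝ) (hε : 0 < ε) :
    Tendsto (fun x : ℝ => x ^ n * Real.exp (-ε * x ^ 2 + β * x + γ)) atTop (𝓝 0) := by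
  have hb : Tendsto (fun x : ℝ => Real.exp γ * (x ^ n * Real.exp (-x))) atTop (𝓝 0) := by
    simpa using (tendsto_pow_mul_exp_neg_atTop_nhds_zero n).const_mul (Real.exp γ)
  apply squeeze_zero_norm' _ hb
  filter_upwards [eventually_ge_atTop (0:ℝ), eventually_ge_atTop ((β+1)/ε)] with x hx0 hx1
  have hxe : -ε * x ^ 2 + β * x + γ ≤ -x + γ := by
    nlinarith [mul_le_mul_of_nonneg_left hx1 hε.le, div_mul_cancel₀ (β+1) hε.ne']
  have : |x ^ n * Real.exp (-ε * x ^ 2 + β * x + γ)| = x ^ n * Real.exp (-ε * x ^ 2 + β * x + γ) := by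
    rw [abs_of_nonneg]; positivity
  rw [Real.norm_eq_abs, this]
  calc x ^ n * Real.exp (-ε * x ^ 2 + β * x + γ) ≤ x ^ n * Real.exp (-x + γ) := by
        apply mul_le_mul_of_nonneg_left (Real.exp_le_exp.2 hxe) (by positivity)
    _ = Real.exp γ * (x ^ n * Real.exp (-x)) := by rw [Real.exp_add]; ring

lemma quad_mul_exp_tendsto (p q r ε β γ : ℝ) (hε : 0 < ε) :
    Tendsto (fun x : ℝ => (p * x ^ 2 + q * x + r) * Real.exp (-ε * x ^ 2 + β * x + γ))
      atTop (𝓝 0) := by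
  have h2 := (pow_mul_exp_quad_tendsto 2 ε β γ hε).const_mul p
  have h1 := (pow_mul_exp_quad_tendsto 1 ε β γ hε).const_mul q
  have h0 := (pow_mul_exp_quad_tendsto 0 ε β γ hε).const_mul r
  have := (h2.add h1).add h0
  simp only [mul_zero, add_zero, pow_one, pow_zero, mul_one] at this
  convert this using 2 with x
  ring

lemma sq_linear_tendsto_atTop {b : ℝ} (c : ℝ) (hbne : b ≠ 0) :
    Tendsto (fun x : ℝ => (b * x + c) ^ 2) atTop atTop := by
  have habs : Tendsto (fun x : ℝ => |b * x + c|) atTop atTop := by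
    rcases hbne.lt_or_gt with hb | hb
    · have h1 : Tendsto (fun x : ℝ => b * x + c) atTop atBot := by
        apply tendsto_atBot_add_const_right
        exact tendsto_id.const_mul_atTop_of_neg hb
      exact tendsto_abs_atBot_atTop.comp h1
    · have h1 : Tendsto (fun x : ℝ => b * x + c) atTop atTop := by
        apply tendsto_atTop_add_const_right
        exact tendsto_id.const_mul_atTop hb
      exact tendsto_abs_atTop_atTop.comp h1
  have : Tendsto (fun x : ℝ => |b * x + c| ^ 2) atTop atTop :=
    (tendsto_pow_atTop (two_ne_zero)).comp habs
  simpa [sq_abs] using this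

/-- A nontrivial finite linear combination of GeLUs with slopes of pairwise
distinct absolute values is not a constant function. -/
theorem stmt_10 (m : ℕ) (hm : 0 < m) (a b c : Fin m → ℝ)
    (hb : ∀ i j, i ≠ j → |b i| ≠ |b j|)
    (hk : ∃ k, a k * b k ≠ 0) :
    ∃ x y : ℝ,
      (∑ i, a i * gelu (b i * x + c i)) ≠ (∑ i, a i * gelu (b i * y + c i)) := by
  by_contra hcon
  push_neg at hcon
  set F : ℝ → ℝ := fun x => ∑ i, a i * gelu (b i * x + c i) with hFdef
  set F1 : ℝ → ℝ := fun x => ∑ i, a i *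
      ((stdGaussCDF (b i * x + c i) + (b i * x + c i) * gaussDen (b i * x + c i)) * b i)
    with hF1def
  set F2 : ℝ → ℝ := fun x => ∑ i, a i *
      ((2 - (b i * x + c i) ^ 2) * gaussDen (b i * x + c i) * b i * b i) with hF2def
  -- linear maps inside
  have hlin : ∀ (i : Fin m) (x : ℝ), HasDerivAt (fun y => b i * y + c i) (b i) x := by
    intro i x
    simpa using ((hasDerivAt_id x).const_mul (b i)).add_const (c i)
  have hdF : ∀ x, HasDerivAt F (F1 x) x := by
    intro x
    apply HasDerivAt.fun_sum
    intro i _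
    have h1 := (gelu_hasDeriv (b i * x + c i)).comp x (hlin i x)
    exact h1.const_mul (a i)
  have hdF1 : ∀ x, HasDerivAt F1 (F2 x) x := by
    intro x
    apply HasDerivAt.fun_sum
    intro i _
    have h1 := (geluDeriv_hasDeriv (b i * x + c i)).comp x (hlin i x)
    exact (h1.mul_const (b i)).const_mul (a i)
  have hF10 : ∀ x, F1 x = 0 := by
    intro x
    have hc : F = fun _ => F 0 := funext fun y => hcon y 0
    have h0 : HasDerivAt F 0 x := by rw [hc]; exact hasDerivAt_const x _
    exact (hdF x).unique h0
  have hF20 : ∀ x, F2 x = 0 := by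
    intro x
    have hc : F1 = fun _ => (0:ℝ) := funext hF10
    have h0 : HasDerivAt F1 0 x := by rw [hc]; exact hasDerivAt_const x _
    exact (hdF1 x).unique h0
  -- choose j
  obtain ⟨k, hkne⟩ := hk
  have hkT : k ∈ Finset.univ.filter (fun i => a i ≠ 0 ∧ b i ≠ 0) := by
    simp only [Finset.mem_filter, Finset.mem_univ, true_and]
    constructor
    · intro h; exact hkne (by rw [h]; ring)
    · intro h; exact hkne (by rw [h]; ring)
  obtain ⟨j, hjT, hjmin⟩ := Finset.exists_min_image _ (fun i => |b i|) ⟨k, hkT⟩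
  simp only [Finset.mem_filter, Finset.mem_univ, true_and] at hjT
  obtain ⟨haj, hbj⟩ := hjT
  have hsqrtpos : (0:ℝ) < Real.sqrt (2 * Real.pi) :=
    Real.sqrt_pos.2 (by positivity)
  -- normalized sum
  set G : ℝ → ℝ := fun x => ∑ i, a i * b i ^ 2 * (2 - (b i * x + c i) ^ 2) *
      Real.exp (((b j * x + c j) ^ 2 - (b i * x + c i) ^ 2) / 2) with hGdef
  have hG0 : ∀ x, G x = 0 := by
    intro x
    have : G x = F2 x * (Real.sqrt (2 * Real.pi) * Real.exp ((b j * x + c j) ^ 2 / 2)) := by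
      rw [hGdef, hF2def]
      simp only [Finset.sum_mul]
      apply Finset.sum_congr rfl
      intro i _
      unfold gaussDen
      rw [show ((b j * x + c j) ^ 2 - (b i * x + c i) ^ 2) / 2
          = -(b i * x + c i) ^ 2 / 2 + (b j * x + c j) ^ 2 / 2 from by ring, Real.exp_add]
      field_simp
    rw [this, hF20 x, zero_mul]
  -- quotient
  set C : ℝ := a j * b j ^ 2 with hCdef
  have hCne : C ≠ 0 := by
    rw [hCdef]; exact mul_ne_zero haj (pow_ne_zero _ hbj)
  set R : ℝ → ℝ := fun x => ∑ i ∈ Finset.univ.erase j, a i * b i ^ 2 * (2 - (b i * x + c i) ^ 2) *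
      Real.exp (((b j * x + c j) ^ 2 - (b i * x + c i) ^ 2) / 2) with hRdef
  have hsplit : ∀ x, G x = C * (2 - (b j * x + c j) ^ 2) + R x := by
    intro x
    simp only [hGdef, hRdef]
    rw [← Finset.add_sum_erase _ _ (Finset.mem_univ j)]
    congr 1
    rw [sub_self, zero_div, Real.exp_zero, hCdef]
    ring
  -- R tendsto 0
  have hR0 : Tendsto R atTop (𝓝 0) := by
    rw [hRdef]
    have : Tendsto (fun x => ∑ i ∈ Finset.univ.erase j, a i * b i ^ 2 * (2 - (b i * x + c i) ^ 2) *
        Real.exp (((b j * x + c j) ^ 2 - (b i * x + c i) ^ 2) / 2)) atTop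
        (𝓝 (∑ i ∈ Finset.univ.erase j, (0:ℝ))) := by
      apply tendsto_finset_sum
      intro i hi
      have hij : i ≠ j := Finset.ne_of_mem_erase hi
      by_cases hAB : a i = 0 ∨ b i = 0
      · have : (fun x : ℝ => a i * b i ^ 2 * (2 - (b i * x + c i) ^ 2) *
            Real.exp (((b j * x + c j) ^ 2 - (b i * x + c i) ^ 2) / 2)) = fun _ => 0 := by
          funext x
          rcases hAB with h | h <;> rw [h] <;> ring
        rw [this]; exact tendsto_const_nhds
      · push_neg at hAB
        have hiT : i ∈ Finset.univ.filter (fun i => a i ≠ 0 ∧ b i ≠ 0) := by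
          simp only [Finset.mem_filter, Finset.mem_univ, true_and]; exact hAB
        have hle : |b j| ≤ |b i| := hjmin i hiT
        have hlt : |b j| < |b i| := lt_of_le_of_ne hle (hb j i (Ne.symm hij))
        have hsq : b j ^ 2 < b i ^ 2 := by
          rw [← sq_abs (b j), ← sq_abs (b i)]
          exact pow_lt_pow_left₀ hlt (abs_nonneg _) two_ne_zero
        set ε : ℝ := (b i ^ 2 - b j ^ 2) / 2 with hε
        have hεpos : 0 < ε := by rw [hε]; linarith
        have key := quad_mul_exp_tendsto (a i * b i ^ 2 * (-(b i ^ 2)))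
          (a i * b i ^ 2 * (-(2 * b i * c i))) (a i * b i ^ 2 * (2 - c i ^ 2))
          ε (b j * c j - b i * c i) ((c j ^ 2 - c i ^ 2) / 2) hεpos
        convert key using 2 with x
        rw [show -ε * x ^ 2 + (b j * c j - b i * c i) * x + (c j ^ 2 - c i ^ 2) / 2
            = ((b j * x + c j) ^ 2 - (b i * x + c i) ^ 2) / 2 from by rw [hε]; ring]
        ring
    simpa using this
  -- main tendsto
  have hmain : Tendsto (fun x => C * (2 - (b j * x + c j) ^ 2) + R x) atTop atBot ∨
      Tendsto (fun x => C * (2 - (b j * x + c j) ^ 2) + R x) atTop atTop := by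
    have hsq := sq_linear_tendsto_atTop (c j) hbj
    rcases hCne.lt_or_gt with hC | hC
    · -- C < 0 : to atTop
      right
      have h2 : Tendsto (fun x : ℝ => (-C) * (b j * x + c j) ^ 2) atTop atTop :=
        hsq.const_mul_atTop (by linarith)
      have h3 : Tendsto (fun x : ℝ => (-C) * (b j * x + c j) ^ 2 + 2 * C) atTop atTop :=
        tendsto_atTop_add_const_right _ _ h2
      have h1 : Tendsto (fun x : ℝ => C * (2 - (b j * x + c j) ^ 2)) atTop atTop :=
        h3.congr fun x => by ring
      exact (hR0.add_atTop h1).congr fun x => by ring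
    · -- 0 < C : to atBot
      left
      have h2 : Tendsto (fun x : ℝ => (-C) * (b j * x + c j) ^ 2) atTop atBot :=
        hsq.const_mul_atTop_of_neg (by linarith)
      have h3 : Tendsto (fun x : ℝ => (-C) * (b j * x + c j) ^ 2 + 2 * C) atTop atBot :=
        tendsto_atBot_add_const_right _ _ h2
      have h1 : Tendsto (fun x : ℝ => C * (2 - (b j * x + c j) ^ 2)) atTop atBot :=
        h3.congr fun x => by ring
      exact (hR0.add_atBot h1).congr fun x => by ring
  have hzero : ∀ x : ℝ, C * (2 - (b j * x + c j) ^ 2) + R x = 0 := by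
    intro x; rw [← hsplit x]; exact hG0 x
  rcases hmain with hmain | hmain
  · obtain ⟨x, hx⟩ := (hmain.eventually (eventually_le_atBot (-1))).exists
    rw [hzero x] at hx; norm_num at hx
  · obtain ⟨x, hx⟩ := (hmain.eventually (eventually_ge_atTop 1)).exists
    rw [hzero x] at hx; norm_num at hx
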